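/- arXiv:1110.1137 — 2 statements merged into one kernel-verified Lean document; each statement's English description precedes it below -/
import Mathlib

section
/- The greedy firing sequence tends to the Thue-Morse sequence as q → 1⁻: for every N ∈ ℕ there exists ε > 0 such that for all q ∈ (1−ε, 1) and all i ≤ N, a_i(q) = t_i. -/
/-- The Thue-Morse sequence on the alphabet `{-1, 1}`:
`t 0 = -1`, `t (2i) = t i`, `t (2i+1) = -t (2i)`. -/
def thueMorse : ℕ → ℤ
  | 0 => -1
  | n + 1 =>
    have : (n + 1) / 2 < n + 1 := Nat.div_lt_self (Nat.succ_pos n) one_lt_two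
    if (n + 1) % 2 = 0 then thueMorse ((n + 1) / 2) else -thueMorse ((n + 1) / 2)

/-- Auxiliary sequence: `greedyAux q n = (a_n(q), S_n(q))` where
`S_n(q) = ∑_{j=0}^n a_j(q) q^j`; the next shooter is `-a_n` iff
`f_n(q) = a_n(q) · S_n(q) ≥ 0`. -/
noncomputable def greedyAux (q : ℝ) : ℕ → ℤ × ℝ
  | 0 => (-1, -1)
  | n + 1 =>
    let p := greedyAux q n
    let next : ℤ := if 0 ≤ (p.1 : ℝ) * p.2 then -p.1 else p.1
    (next, p.2 + (next : ℝ) * q ^ (n + 1))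

/-- The greedy firing sequence `a(q) : ℕ → {-1, 1}`: `a 0 = -1`, and
`a (n+1) = -a n` if `f_n(q) = a_n · (∑_{j=0}^n a_j q^j) ≥ 0`, else `a (n+1) = a n`. -/
noncomputable def greedySeq (q : ℝ) (n : ℕ) : ℤ := (greedyAux q n).1

lemma tm_even (i : ℕ) : thueMorse (2 * i) = thueMorse i := by
  cases i with
  | zero => rfl
  | succ k =>
    rw [show 2 * (k + 1) = (2 * k + 1) + 1 by ring, thueMorse,
      if_pos (by omega : (2 * k + 1 + 1) % 2 = 0),
      show (2 * k + 1 + 1) / 2 = k + 1 by omega]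

lemma tm_odd (i : ℕ) : thueMorse (2 * i + 1) = -thueMorse i := by
  rw [thueMorse, if_neg (by omega : ¬ (2 * i + 1) % 2 = 0),
    show (2 * i + 1) / 2 = i by omega]

lemma tm_sq (n : ℕ) : thueMorse n = 1 ∨ thueMorse n = -1 := by
  induction n using Nat.strong_induction_on with
  | _ n ih =>
    match n with
    | 0 => right; rw [thueMorse]
    | k + 1 =>
      rw [thueMorse]
      have h := ih ((k+1)/2) (Nat.div_lt_self (Nat.succ_pos k) one_lt_two)
      split <;> omega

/-- Partial sums of the Thue–Morse power series. -/
noncomputable def tmSum (n : ℕ) (q : ℝ) : ℝ :=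
  ∑ j ∈ Finset.range (n + 1), (thueMorse j : ℝ) * q ^ j

lemma tm_abs (j : ℕ) : |(thueMorse j : ℝ)| = 1 := by
  rcases tm_sq j with h | h <;> rw [h] <;> norm_num

lemma tmSum_succ (n : ℕ) (q : ℝ) :
    tmSum (n + 1) q = tmSum n q + (thueMorse (n + 1) : ℝ) * q ^ (n + 1) := by
  simp only [tmSum, Finset.sum_range_succ]

lemma tmSum_pair (m : ℕ) (q : ℝ) : tmSum (2 * m + 1) q = (1 - q) * tmSum m (q ^ 2) := by
  induction m with
  | zero =>
    simp only [tmSum, Finset.sum_range_succ, Finset.sum_range_zero]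
    rw [show thueMorse 1 = -thueMorse 0 from tm_odd 0, thueMorse]
    push_cast; ring
  | succ k ih =>
    have h1 : 2 * (k + 1) + 1 = (2 * k + 1) + 1 + 1 := by ring
    rw [h1, tmSum_succ, tmSum_succ, ih, tmSum_succ]
    rw [show (2*k+1)+1 = 2*(k+1) by ring, tm_even, tm_odd (k+1)]
    have hq : (q ^ 2) ^ (k + 1) = q ^ (2 * (k + 1)) := by rw [← pow_mul]
    push_cast
    rw [hq]
    ring

lemma tmSum_bound (m : ℕ) (x : ℝ) (hx0 : 0 ≤ x) (hx1 : x ≤ 1) :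
    |tmSum m x| ≤ (m : ℝ) + 1 := by
  calc |tmSum m x| ≤ ∑ j ∈ Finset.range (m + 1), |(thueMorse j : ℝ) * x ^ j| :=
        Finset.abs_sum_le_sum_abs _ _
    _ ≤ ∑ j ∈ Finset.range (m + 1), (1 : ℝ) := by
        apply Finset.sum_le_sum
        intro j _
        rw [abs_mul, tm_abs, one_mul, abs_of_nonneg (pow_nonneg hx0 j)]
        exact pow_le_one₀ hx0 hx1
    _ = (m : ℝ) + 1 := by simp

lemma key (n : ℕ) : ∃ ε > (0 : ℝ), ∀ q ∈ Set.Ioo (1 - ε) (1 : ℝ),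
    (thueMorse (n + 1) : ℝ) * tmSum n q < 0 := by
  induction n using Nat.strong_induction_on with
  | _ n ih =>
    match n with
    | 0 =>
      refine ⟨1, one_pos, fun q hq => ?_⟩
      have h1 : thueMorse 1 = 1 := by rw [show (1:ℕ) = 2*0+1 by rfl, tm_odd, thueMorse]; rfl
      simp [tmSum, h1, thueMorse]
    | k + 1 =>
      rcases Nat.even_or_odd (k + 1) with ⟨m, hm⟩ | ⟨m, hm⟩
      · -- even : k + 1 = 2 * m, with m ≥ 1
        have hm1 : 1 ≤ m := by omega
        obtain ⟨m', rfl⟩ : ∃ m', m = m' + 1 := ⟨m - 1, by omega⟩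
        have hn : k + 1 = 2 * (m' + 1) := by omega
        refine ⟨1 / (3 * (m' : ℝ) + 4), by positivity, fun q hq => ?_⟩
        obtain ⟨hq1, hq2⟩ := hq
        have hq0 : 0 < q := by
          have : (1 : ℝ) / (3 * (m' : ℝ) + 4) ≤ 1 := by
            rw [div_le_one (by positivity)]; nlinarith [Nat.cast_nonneg (α := ℝ) m']
          linarith
        -- decompose the sum
        have hdec : tmSum (k + 1) q
            = (1 - q) * tmSum m' (q ^ 2) + (thueMorse (m' + 1) : ℝ) * q ^ (2 * (m' + 1)) := by
          rw [hn, show 2 * (m' + 1) = (2 * m' + 1) + 1 by ring, tmSum_succ, tmSum_pair,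
            show 2 * m' + 1 + 1 = 2 * (m' + 1) by ring, tm_even]
        have htm : thueMorse (k + 1 + 1) = -thueMorse (m' + 1) := by
          rw [show k + 1 + 1 = 2 * (m' + 1) + 1 by omega, tm_odd]
        have hb := tmSum_bound m' (q ^ 2) (by positivity) (by nlinarith)
        have hbern : 1 + (2 * (m' : ℝ) + 2) * (q - 1) ≤ q ^ (2 * (m' + 1)) := by
          have h := one_add_mul_le_pow (a := q - 1) (by linarith) (2 * (m' + 1))
          rw [show (1:ℝ) + (q - 1) = q by ring] at h
          push_cast at h
          linarith
        have hq1' : 1 - q < 1 / (3 * (m' : ℝ) + 4) := by linarith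
        have h0 : (0:ℝ) ≤ 1 - q := by linarith
        have hkey : (1 - q) * (3 * (m' : ℝ) + 4) < 1 :=
          (lt_div_iff₀ (by positivity : (0:ℝ) < 3 * (m' : ℝ) + 4)).mp hq1'
        rcases abs_le.mp hb with ⟨hbl, hbr⟩
        have A := mul_le_mul_of_nonneg_left hbl h0
        have B := mul_le_mul_of_nonneg_left hbr h0
        rw [htm, hdec]
        rcases tm_sq (m' + 1) with h | h <;> rw [h] <;> push_cast <;>
          nlinarith [A, B, hbern, hkey]
      · -- odd : k + 1 = 2 * m + 1
        obtain ⟨ε, hε, hIH⟩ := ih m (by omega)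
        refine ⟨min (ε / 2) 1, by positivity, fun q hq => ?_⟩
        obtain ⟨hq1, hq2⟩ := hq
        have hq0 : 0 < q := by
          have : min (ε / 2) 1 ≤ 1 := min_le_right _ _
          linarith
        have hsq : q ^ 2 ∈ Set.Ioo (1 - ε) (1 : ℝ) := by
          constructor
          · have h1 : min (ε / 2) 1 ≤ ε / 2 := min_le_left _ _
            nlinarith
          · nlinarith
        have hI := hIH (q ^ 2) hsq
        rw [hm, tmSum_pair, show 2 * m + 1 + 1 = 2 * (m + 1) by ring, tm_even]
        nlinarith

lemma greedyAux_snd (q : ℝ) (n : ℕ) :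
    (greedyAux q n).2 = ∑ j ∈ Finset.range (n + 1), (greedySeq q j : ℝ) * q ^ j := by
  induction n with
  | zero => simp [greedyAux, greedySeq]
  | succ k ih =>
    rw [Finset.sum_range_succ, ← ih]
    simp only [greedyAux, greedySeq]

/-- The greedy firing sequence tends to the Thue-Morse sequence as `q → 1⁻`:
for every `N` there is `ε > 0` such that for all `q ∈ (1-ε, 1)` and all `i ≤ N`,
`a_i(q) = t_i`. -/
theorem greedySeq_tendsto_thueMorse (N : ℕ) :
    ∃ ε > (0 : ℝ), ∀ q ∈ Set.Ioo (1 - ε) (1 : ℝ), ∀ i ≤ N,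
      greedySeq q i = thueMorse i := by
  induction N with
  | zero =>
    refine ⟨1, one_pos, fun q _ i hi => ?_⟩
    interval_cases i
    rw [greedySeq, greedyAux, thueMorse]
  | succ M ihM =>
    obtain ⟨ε₁, hε₁, h₁⟩ := ihM
    obtain ⟨ε₂, hε₂, h₂⟩ := key M
    refine ⟨min ε₁ ε₂, lt_min hε₁ hε₂, fun q hq i hi => ?_⟩
    obtain ⟨hqa, hqb⟩ := hq
    have hq1 : q ∈ Set.Ioo (1 - ε₁) (1 : ℝ) :=
      ⟨by have := min_le_left ε₁ ε₂; linarith, hqb⟩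
    have hq2 : q ∈ Set.Ioo (1 - ε₂) (1 : ℝ) :=
      ⟨by have := min_le_right ε₁ ε₂; linarith, hqb⟩
    rcases Nat.lt_or_ge i (M + 1) with hi' | hi'
    · exact h₁ q hq1 i (by omega)
    · have hiM : i = M + 1 := by omega
      subst hiM
      have hfst : (greedyAux q M).1 = thueMorse M := h₁ q hq1 M le_rfl
      have hsnd : (greedyAux q M).2 = tmSum M q := by
        rw [greedyAux_snd, tmSum]
        exact Finset.sum_congr rfl fun j hj => by
          rw [h₁ q hq1 j (by simpa [Nat.lt_succ_iff] using hj)]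
      have hT := h₂ q hq2
      have hstep : greedySeq q (M + 1)
          = if 0 ≤ (thueMorse M : ℝ) * tmSum M q then -thueMorse M else thueMorse M := by
        rw [greedySeq]
        simp only [greedyAux]
        rw [hfst, hsnd]
      rw [hstep]
      rcases tm_sq M with hM | hM <;> rcases tm_sq (M + 1) with hM1 | hM1 <;>
        rw [hM1] at hT <;> rw [hM, hM1] <;> push_cast at hT <;>
        split_ifs with hc <;> (try push_cast at hc) <;> first | omega | (exfalso; linarith)
end

section
/- Any initial segment of the Thue-Morse sequence written over the alphabet {0,1}, for either assignment of the two players to the two symbols, agrees with some base-(1+1/n) expansion of n/2 (with all digits to the right of the radix point) for all sufficiently large n. Precisely: let b_i = (1 + t_i)/2 ∈ {0,1}. For every N ∈ ℕ there exists n_0 such that for all integers n ≥ n_0, setting β = 1 + 1/n, there exists a digit sequence c : ℕ → {0,1} with c_i = b_i for all i < N and ∑_{i=0}^{∞} c_i β^{−(i+1)} = n/2; and likewise there exists a digit sequence c' : ℕ → {0,1} with c'_i = 1 − b_i for all i < N and ∑_{i=0}^{∞} c'_i β^{−(i+1)} = n/2. -/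
lemma tm_pm : ∀ i, thueMorse i = 1 ∨ thueMorse i = -1 := by
  intro i
  induction i using Nat.strong_induction_on with
  | _ i ih =>
    match i with
    | 0 => right; rw [thueMorse]
    | n + 1 =>
      have h := ih ((n+1)/2) (Nat.div_lt_self (Nat.succ_pos n) one_lt_two)
      rw [thueMorse]
      split <;> omega

noncomputable def grem (β x : ℝ) : ℕ → ℝ
  | 0 => x
  | k + 1 => if 1 ≤ β * grem β x k then β * grem β x k - 1 else β * grem β x k

noncomputable def gdig (β x : ℝ) (k : ℕ) : ℕ := if 1 ≤ β * grem β x k then 1 else 0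

lemma gdig_le_one (β x : ℝ) (k : ℕ) : gdig β x k ≤ 1 := by
  unfold gdig; split <;> simp

lemma grem_succ (β x : ℝ) (k : ℕ) :
    grem β x (k + 1) = β * grem β x k - (gdig β x k : ℝ) := by
  rw [grem, gdig]; split <;> simp

lemma grem_bounds (β x : ℝ) (hβ : 1 < β) (hβ2 : β ≤ 2) (hx0 : 0 ≤ x)
    (hx1 : x ≤ 1 / (β - 1)) : ∀ k, 0 ≤ grem β x k ∧ grem β x k ≤ 1 / (β - 1) := by
  have hb1 : (0:ℝ) < β - 1 := by linarith
  have hM1 : (1:ℝ) ≤ 1 / (β - 1) := by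
    rw [le_div_iff₀ hb1]; linarith
  intro k
  induction k with
  | zero => exact ⟨hx0, hx1⟩
  | succ k ih =>
    rw [grem]
    split_ifs with h
    · constructor
      · linarith
      · have h1 : β * grem β x k ≤ β * (1 / (β - 1)) :=
          mul_le_mul_of_nonneg_left ih.2 (by linarith)
        have h2 : β * (1 / (β - 1)) = 1 / (β - 1) + 1 := by
          field_simp
          ring
        linarith
    · push_neg at h
      exact ⟨mul_nonneg (by linarith) ih.1, by linarith⟩

lemma gsum_eq (β x : ℝ) (hβ : 1 < β) : ∀ k,
    ∑ i ∈ Finset.range k, (gdig β x i : ℝ) / β ^ (i+1) = x - grem β x k / β ^ k := by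
  have hβ0 : (0:ℝ) < β := by linarith
  intro k
  induction k with
  | zero => simp [grem]
  | succ k ih =>
    rw [Finset.sum_range_succ, ih, grem_succ]
    have hb : (β:ℝ)^k ≠ 0 := by positivity
    field_simp
    ring

lemma ghasSum (β x : ℝ) (hβ : 1 < β) (hβ2 : β ≤ 2) (hx0 : 0 ≤ x) (hx1 : x ≤ 1/(β-1)) :
    HasSum (fun i => (gdig β x i : ℝ) / β ^ (i+1)) x := by
  have hβ0 : (0:ℝ) < β := by linarith
  rw [hasSum_iff_tendsto_nat_of_nonneg (fun i => by positivity)]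
  simp_rw [gsum_eq β x hβ]
  have h0 : Filter.Tendsto (fun k => grem β x k / β^k) Filter.atTop (nhds 0) := by
    have hb : ∀ k, grem β x k / β^k ≤ (1/(β-1)) * (1/β)^k := by
      intro k
      rw [one_div β, inv_pow, div_eq_mul_inv]
      exact mul_le_mul_of_nonneg_right (grem_bounds β x hβ hβ2 hx0 hx1 k).2
        (by positivity)
    have hg : Filter.Tendsto (fun k => (1/(β-1)) * (1/β)^k) Filter.atTop (nhds 0) := by
      have := (tendsto_pow_atTop_nhds_zero_of_lt_one
        (le_of_lt (by positivity : (0:ℝ) < 1/β))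
        (by rw [div_lt_one hβ0]; linarith : 1/β < 1)).const_mul (1/(β-1))
      simpa using this
    exact squeeze_zero
      (fun k => div_nonneg (grem_bounds β x hβ hβ2 hx0 hx1 k).1 (by positivity)) hb hg
  simpa using Filter.Tendsto.sub (tendsto_const_nhds (x := x)) h0

lemma geom_id (β : ℝ) (hβ : 1 < β) (N : ℕ) :
    ∑ i ∈ Finset.range N, (1:ℝ) / β ^ (i+1) = (1 - (1/β)^N) / (β - 1) := by
  have hβ0 : β ≠ 0 := by intro h; rw [h] at hβ; linarith
  have hb1 : β - 1 ≠ 0 := by intro h; nlinarith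
  induction N with
  | zero => simp
  | succ N ih =>
    rw [Finset.sum_range_succ, ih]
    field_simp
    have hX : β^N * β⁻¹^N = 1 := by rw [← mul_pow, mul_inv_cancel₀ hβ0, one_pow]
    have hI : β * β⁻¹ = 1 := mul_inv_cancel₀ hβ0
    linear_combination (-β + β*β⁻¹) * hX + hI

lemma prefix_rep (β : ℝ) (hβ : 1 < β) (hβ2 : β ≤ 2) (N : ℕ) (b : ℕ → ℕ)
    (hb : ∀ i, b i ≤ 1) (x : ℝ)
    (hS : ∑ i ∈ Finset.range N, (b i : ℝ) / β ^ (i+1) ≤ x)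
    (hx : (x - ∑ i ∈ Finset.range N, (b i : ℝ) / β ^ (i+1)) * β ^ N ≤ 1 / (β - 1)) :
    ∃ c : ℕ → ℕ, (∀ i, c i ≤ 1) ∧ (∀ i < N, c i = b i) ∧
      HasSum (fun i => (c i : ℝ) / β ^ (i+1)) x := by
  have hβ0 : (0:ℝ) < β := by linarith
  set S := ∑ i ∈ Finset.range N, (b i : ℝ) / β ^ (i+1) with hSdef
  set y := (x - S) * β ^ N with hy
  have hy0 : 0 ≤ y := mul_nonneg (by linarith) (by positivity)
  set c : ℕ → ℕ := fun i => if i < N then b i else gdig β y (i - N) with hc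
  have hcb : ∀ i < N, c i = b i := fun i hi => by simp [hc, hi]
  refine ⟨c, fun i => ?_, hcb, ?_⟩
  · rw [hc]; dsimp only; split; exacts [hb i, gdig_le_one β y _]
  · have hsum := ghasSum β y hβ hβ2 hy0 hx
    have heq : (fun i => ((gdig β y i : ℝ)/β^(i+1)) * (β^N)⁻¹) =
        (fun i => ((c (i+N) : ℝ))/β^((i+N)+1)) := by
      funext i
      have h1 : c (i+N) = gdig β y i := by
        simp only [hc, if_neg (by omega : ¬ i + N < N), Nat.add_sub_cancel]
      rw [h1, show (i+N)+1 = (i+1)+N by omega, pow_add]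
      field_simp
      ring
    have h2 := hsum.mul_right (β^N)⁻¹
    rw [heq] at h2
    have h3 := (hasSum_nat_add_iff (f := fun i => ((c i : ℝ))/β^(i+1)) N).1 h2
    have h4 : ∑ i ∈ Finset.range N, ((c i : ℝ))/β^(i+1) = S := by
      apply Finset.sum_congr rfl
      intro i hi
      rw [hcb i (Finset.mem_range.1 hi)]
    rw [h4] at h3
    have h5 : y * (β^N)⁻¹ = x - S := by
      rw [hy, mul_assoc, mul_inv_cancel₀ (by positivity), mul_one]
    rw [h5] at h3
    simpa using h3

lemma main_helper (N n : ℕ) (hn : 1 ≤ n) (hβN : (1 + 1/(n:ℝ))^N < 2) (b : ℕ → ℕ)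
    (hb : ∀ i, b i ≤ 1) :
    ∃ c : ℕ → ℕ, (∀ i, c i ≤ 1) ∧ (∀ i < N, c i = b i) ∧
      (∑' i : ℕ, (c i : ℝ) / (1 + 1/(n:ℝ)) ^ (i + 1)) = (n:ℝ)/2 := by
  set β := 1 + 1/(n:ℝ) with hβdef
  have hn1 : (1:ℝ) ≤ n := by exact_mod_cast hn
  have hnpos : (0:ℝ) < n := by linarith
  have hβ : 1 < β := by
    have : 0 < 1/(n:ℝ) := by positivity
    rw [hβdef]; linarith
  have hβ2 : β ≤ 2 := by
    have : 1/(n:ℝ) ≤ 1 := by rw [div_le_one hnpos]; linarith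
    rw [hβdef]; linarith
  have hbm : β - 1 = 1/(n:ℝ) := by rw [hβdef]; ring
  have hMn : 1/(β-1) = (n:ℝ) := by rw [hbm, one_div_one_div]
  have hβNpos : (0:ℝ) < β^N := by positivity
  set S := ∑ i ∈ Finset.range N, (b i:ℝ)/β^(i+1) with hS
  have hS0 : 0 ≤ S := Finset.sum_nonneg (fun i _ => by positivity)
  have hS1 : S ≤ (n:ℝ)*(1 - (1/β)^N) := by
    calc S ≤ ∑ i ∈ Finset.range N, (1:ℝ)/β^(i+1) := by
          apply Finset.sum_le_sum
          intro i _
          gcongr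
          exact_mod_cast hb i
      _ = (1 - (1/β)^N)/(β-1) := geom_id β hβ N
      _ = (n:ℝ)*(1-(1/β)^N) := by rw [hbm, div_div_eq_mul_div, div_one, mul_comm]
  have hinv : (1:ℝ)/2 ≤ (1/β)^N := by
    have h := one_div_le_one_div_of_le hβNpos (le_of_lt hβN)
    rw [div_pow, one_pow]
    exact h
  have hSx : S ≤ (n:ℝ)/2 := by nlinarith
  have hxx : ((n:ℝ)/2 - S)*β^N ≤ 1/(β-1) := by
    rw [hMn]
    nlinarith [mul_nonneg hS0 hβNpos.le,
      mul_nonneg (by linarith : (0:ℝ) ≤ (n:ℝ)/2) (by linarith : (0:ℝ) ≤ 2 - β^N)]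
  obtain ⟨c, hc1, hc2, hc3⟩ := prefix_rep β hβ hβ2 N b hb ((n:ℝ)/2) hSx hxx
  exact ⟨c, hc1, hc2, hc3.tsum_eq⟩

/-- any initial segment of the Thue-Morse sequence written over `{0,1}`
(with `b_i = (1 + t_i)/2`), for either assignment of the players to the symbols,
agrees with some base-`(1 + 1/n)` expansion of `n/2` with all digits to the right of
the radix point, for all sufficiently large `n`. -/
theorem thueMorse_initialSegment_is_beta_expansion (N : ℕ) :
    ∃ n₀ : ℕ, ∀ n : ℕ, n₀ ≤ n →
      (∃ c : ℕ → ℕ, (∀ i, c i ≤ 1) ∧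
        (∀ i < N, (c i : ℤ) = (1 + thueMorse i) / 2) ∧
        (∑' i : ℕ, (c i : ℝ) / (1 + 1 / (n : ℝ)) ^ (i + 1)) = (n : ℝ) / 2) ∧
      (∃ c' : ℕ → ℕ, (∀ i, c' i ≤ 1) ∧
        (∀ i < N, (c' i : ℤ) = 1 - (1 + thueMorse i) / 2) ∧
        (∑' i : ℕ, (c' i : ℝ) / (1 + 1 / (n : ℝ)) ^ (i + 1)) = (n : ℝ) / 2) := by
  have h1 : Filter.Tendsto (fun n : ℕ => 1 + 1/(n:ℝ)) Filter.atTop (nhds (1+0)) :=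
    tendsto_const_nhds.add tendsto_one_div_atTop_nhds_zero_nat
  have h2 := h1.pow N
  have hev : ∀ᶠ n : ℕ in Filter.atTop, (1 + 1/(n:ℝ))^N < 2 :=
    h2.eventually (eventually_lt_nhds (by norm_num))
  obtain ⟨m, hm⟩ := Filter.eventually_atTop.1 hev
  refine ⟨max m 1, fun n hn => ?_⟩
  have hn1 : 1 ≤ n := le_trans (le_max_right m 1) hn
  have hβN := hm n (le_trans (le_max_left m 1) hn)
  constructor
  · obtain ⟨c, hc1, hc2, hc3⟩ := main_helper N n hn1 hβN
      (fun i => if thueMorse i = 1 then 1 else 0)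
      (fun i => by split <;> simp)
    refine ⟨c, hc1, fun i hi => ?_, hc3⟩
    rw [hc2 i hi]
    rcases tm_pm i with h | h <;> norm_num [h]
  · obtain ⟨c, hc1, hc2, hc3⟩ := main_helper N n hn1 hβN
      (fun i => if thueMorse i = 1 then 0 else 1)
      (fun i => by split <;> simp)
    refine ⟨c, hc1, fun i hi => ?_, hc3⟩
    rw [hc2 i hi]
    rcases tm_pm i with h | h <;> norm_num [h]
end
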